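/- Let a_m = 2 if m is odd and a_m = 1 if m is even. Then for every m ≥ 1, |bP_{4m}| = 2^{2m-2} (2^{2m-1} - 1) * numerator(4 B_m / m) equals 2^{2m-2} (2^{2m-1} - 1) * a_m * numerator(B_m / (4m)), where B_m denotes the m-th Bernoulli number in the convention B_1 = 1/6 and numerator means numerator in lowest terms. -/

import Mathlib

/-- Hirzebruch's convention: `B m = (-1)^(m+1) * bernoulli (2m)`, so `B 1 = 1/6`. -/
def hirzebruchB (m : ℕ) : ℚ := (-1) ^ (m + 1) * bernoulli (2 * m)

/-- `a_m = 2` for `m` odd and `a_m = 1` for `m` even. -/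
def aCoeff (m : ℕ) : ℕ := if Odd m then 2 else 1

open Finset

private lemma norm2_two : padicNorm 2 (2 : ℚ) = 2⁻¹ := by
  have := padicNorm.padicNorm_p (p := 2) (by norm_num)
  simpa using this

private lemma bern_key : ∀ p : ℕ, padicNorm 2 (bernoulli p) ≤ 2 ∧
    (Even p → p ≠ 0 → padicNorm 2 (bernoulli p) = 2) := by
  intro p
  induction p using Nat.strong_induction_on with
  | _ p IH =>
    obtain _|_|q := p
    · constructor
      · rw [bernoulli_zero, padicNorm.one]; norm_num
      · intro _ h; exact absurd rfl h
    · constructor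
      · rw [bernoulli_one]
        rw [show (-1/2 : ℚ) = -(1/2) by ring, padicNorm.neg, padicNorm.div, padicNorm.one,
          norm2_two]
        norm_num
      · intro h; exact absurd h (by decide)
    · set p := q + 2 with hp
      rcases Nat.even_or_odd p with hev | hodd
      swap
      · -- odd case: bernoulli p = 0
        have h0 : bernoulli p = 0 := by
          rw [bernoulli_eq_bernoulli'_of_ne_one (by omega)]
          exact bernoulli'_eq_zero_of_odd hodd (by omega)
        constructor
        · rw [h0, padicNorm.zero]; norm_num
        · intro h; exact absurd h (by simp [Nat.not_even_iff_odd.mpr hodd])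
      · -- even case
        have key : bernoulli p * (p + 1) * 2 =
            (p + 1 : ℚ) - ∑ i ∈ range p, bernoulli i * ((p + 1).choose i) * (2:ℚ) ^ (p + 1 - i) := by
          have hF := sum_range_pow 2 p
          have hL : (∑ k ∈ range 2, (k : ℚ) ^ p) = 1 := by
            have h0 : (0:ℚ) ^ p = 0 := zero_pow (by omega)
            rw [Finset.sum_range_succ, Finset.sum_range_one]
            norm_num [h0]
          rw [hL] at hF
          have hp1 : ((p : ℚ) + 1) ≠ 0 := by positivity
          have hF2 : (p + 1 : ℚ) = ∑ i ∈ range (p + 1),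
              bernoulli i * ((p + 1).choose i) * (2:ℚ) ^ (p + 1 - i) := by
            rw [← Finset.sum_div] at hF
            field_simp at hF
            exact_mod_cast hF
          rw [Finset.sum_range_succ] at hF2
          rw [Nat.choose_succ_self_right, Nat.add_sub_cancel_left] at hF2
          push_cast at hF2 ⊢
          ring_nf
          ring_nf at hF2
          linarith [hF2]
        set S := ∑ i ∈ range p, bernoulli i * ((p + 1).choose i) * (2:ℚ) ^ (p + 1 - i) with hS
        have hterm : ∀ i ∈ range p,
            padicNorm 2 (bernoulli i * ((p + 1).choose i) * (2:ℚ) ^ (p + 1 - i)) ≤ 1/2 := by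
          intro i hi
          rw [Finset.mem_range] at hi
          have hB : padicNorm 2 (bernoulli i) ≤ 2 := (IH i hi).1
          have hC : padicNorm 2 (((p + 1).choose i : ℚ)) ≤ 1 := padicNorm.of_nat _
          have hpow : padicNorm 2 ((2:ℚ) ^ (p + 1 - i)) ≤ 1/4 := by
            have h4' : (2:ℤ) ^ 2 ∣ (2:ℤ) ^ (p + 1 - i) := pow_dvd_pow 2 (by omega)
            have h4 : (((2:ℕ) ^ 2 : ℕ) : ℤ) ∣ ((2:ℤ) ^ (p + 1 - i)) := by
              exact_mod_cast h4'
            have := (padicNorm.dvd_iff_norm_le (p := 2) (n := 2) (z := (2:ℤ) ^ (p + 1 - i))).mp h4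
            have hc : (((2:ℤ) ^ (p + 1 - i) : ℤ) : ℚ) = (2:ℚ) ^ (p + 1 - i) := by push_cast; ring
            rw [hc] at this
            calc padicNorm 2 ((2:ℚ) ^ (p + 1 - i)) ≤ (2:ℚ) ^ (-2 : ℤ) := this
              _ = 1/4 := by norm_num
          rw [padicNorm.mul, padicNorm.mul]
          calc padicNorm 2 (bernoulli i) * padicNorm 2 (((p + 1).choose i : ℚ)) *
                padicNorm 2 ((2:ℚ) ^ (p + 1 - i))
              ≤ 2 * 1 * (1/4) := by
                gcongr <;> first | exact padicNorm.nonneg _ | assumption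
            _ = 1/2 := by norm_num
        have hSnorm : padicNorm 2 S ≤ 1/2 := padicNorm.sum_le' hterm (by norm_num)
        have hP1 : padicNorm 2 ((p : ℚ) + 1) = 1 := by
          have : ¬ (2 ∣ (p + 1)) := by
            rcases hev with ⟨t, ht⟩; omega
          have h := (padicNorm.nat_eq_one_iff (p := 2) (m := p + 1)).mpr this
          exact_mod_cast h
        have hRHS : padicNorm 2 ((p : ℚ) + 1 - S) = 1 := by
          rw [sub_eq_add_neg, padicNorm.add_eq_max_of_ne, padicNorm.neg, hP1]
          · exact max_eq_left (by linarith)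
          · rw [hP1, padicNorm.neg]; intro h; rw [← h] at hSnorm; linarith
        have hLHS : padicNorm 2 (bernoulli p * ((p:ℚ) + 1) * 2) =
            padicNorm 2 (bernoulli p) * (1/2) := by
          rw [padicNorm.mul, padicNorm.mul, hP1, norm2_two]
          ring
        have hkey2 : padicNorm 2 (bernoulli p) * (1/2) = 1 := by
          rw [← hLHS, key]; exact hRHS
        have heq : padicNorm 2 (bernoulli p) = 2 := by linarith
        exact ⟨le_of_eq heq, fun _ _ => heq⟩


private lemma num_div_natAbs (a b : ℤ) (hb : 0 < b) :
    ((a : ℚ) / (b : ℚ)).num.natAbs = a.natAbs / Nat.gcd a.natAbs b.natAbs := by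
  rw [← Rat.divInt_eq_div, Rat.num_divInt, Int.sign_eq_one_of_pos hb, one_mul, Int.gcd_comm,
    Int.natAbs_ediv_of_dvd (Int.gcd_dvd_left a b)]
  simp [Int.gcd]


lemma bern_facts (m : ℕ) (hm : 1 ≤ m) (hnorm : padicNorm 2 (bernoulli (2 * m)) = 2) :
    ¬ (2:ℤ) ∣ (bernoulli (2 * m)).num ∧ padicValNat 2 (bernoulli (2 * m)).den = 1 := by
  set q := bernoulli (2 * m) with hq
  have hq0 : q ≠ 0 := by
    intro h; rw [h, padicNorm.zero] at hnorm; norm_num at hnorm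
  have hval : padicValRat 2 q = -1 := by
    have h2 := padicNorm.eq_zpow_of_nonzero (p := 2) hq0
    rw [hnorm] at h2
    have h1 : (2:ℚ) ^ (-padicValRat 2 q) = 2 ^ (1:ℤ) := by simpa using h2.symm
    have := zpow_right_injective₀ (by norm_num : (0:ℚ) < 2) (by norm_num) h1
    omega
  have hdef : padicValRat 2 q = (padicValNat 2 q.num.natAbs : ℤ) - padicValNat 2 q.den := rfl
  have hnum : ¬ (2:ℤ) ∣ q.num := by
    intro h
    have h2 : 2 ∣ q.num.natAbs := by
      have := Int.natAbs_dvd_natAbs.mpr h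
      simpa using this
    have hden : ¬ 2 ∣ q.den := by
      intro hd
      have := Nat.dvd_gcd h2 hd
      rw [q.reduced] at this
      omega
    have hd0 : padicValNat 2 q.den = 0 := padicValNat.eq_zero_of_not_dvd hden
    rw [hdef, hd0] at hval
    omega
  have hnum' : padicValNat 2 q.num.natAbs = 0 := by
    apply padicValNat.eq_zero_of_not_dvd
    intro h
    exact hnum (Int.natAbs_dvd_natAbs.mp (by simpa using h) : (2:ℤ) ∣ q.num)
  refine ⟨hnum, ?_⟩
  rw [hdef, hnum'] at hval
  omega

lemma hB_facts (m : ℕ) (hm : 1 ≤ m)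
    (hnorm : padicNorm 2 (bernoulli (2 * m)) = 2) :
    ¬ (2:ℤ) ∣ (hirzebruchB m).num ∧ 2 ∣ (hirzebruchB m).den ∧ ¬ 4 ∣ (hirzebruchB m).den := by
  obtain ⟨hnum, hden⟩ := bern_facts m hm hnorm
  set q := bernoulli (2 * m) with hq
  have hden2 : 2 ∣ q.den := by
    have := pow_padicValNat_dvd (p := 2) (n := q.den)
    rwa [hden, pow_one] at this
  have hden4 : ¬ 4 ∣ q.den := by
    have := pow_succ_padicValNat_not_dvd (p := 2) (n := q.den) q.den_nz
    rwa [hden, show 2 ^ (1+1) = 4 from rfl] at this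
  have hsplit : hirzebruchB m = q ∨ hirzebruchB m = -q := by
    rcases Nat.even_or_odd (m + 1) with he | ho
    · left; rw [hirzebruchB, he.neg_one_pow, one_mul]
    · right; rw [hirzebruchB, ho.neg_one_pow, neg_one_mul]
  rcases hsplit with h | h <;> rw [h]
  · exact ⟨hnum, hden2, hden4⟩
  · refine ⟨?_, ?_, ?_⟩
    · rw [Rat.neg_num, dvd_neg]; exact hnum
    · rw [Rat.neg_den]; exact hden2
    · rw [Rat.neg_den]; exact hden4


theorem main (m : ℕ) (hm : 1 ≤ m)
    (hnorm : padicNorm 2 (bernoulli (2 * m)) = 2) :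
    (4 * hirzebruchB m / m).num.natAbs
      = aCoeff m * (hirzebruchB m / (4 * m)).num.natAbs := by
  obtain ⟨hnum, hden2, hden4⟩ := hB_facts m hm hnorm
  set B := hirzebruchB m with hB
  set N := B.num with hN
  set A := N.natAbs with hA
  obtain ⟨d, hD⟩ := hden2
  have hd2 : ¬ 2 ∣ d := by intro ⟨e, he⟩; exact hden4 ⟨e, by omega⟩
  have hd0 : d ≠ 0 := by intro h; have := B.den_nz; omega
  have hm0 : m ≠ 0 := by omega
  have hA2 : ¬ 2 ∣ A := by
    intro h
    exact hnum (Int.natAbs_dvd_natAbs.mp (by simpa using h) : (2:ℤ) ∣ N)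
  have hBeq : B = (N : ℚ) / (B.den : ℚ) := (Rat.num_div_den B).symm
  have hDQ : (B.den : ℚ) = 2 * d := by rw [hD]; push_cast; ring
  have hd0' : (d : ℚ) ≠ 0 := Nat.cast_ne_zero.mpr hd0
  have hm0' : (m : ℚ) ≠ 0 := Nat.cast_ne_zero.mpr hm0
  -- right-hand side numerator
  have e2 : B / (4 * m) = (N : ℚ) / (((8 * (d * m) : ℕ) : ℤ) : ℚ) := by
    rw [hBeq, hDQ]
    push_cast
    rw [div_div, div_eq_div_iff (by positivity) (by positivity)]
    ring
  have r2 : (B / (4 * m)).num.natAbs = A / Nat.gcd A (8 * (d * m)) := by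
    rw [e2, num_div_natAbs _ _ (by positivity), Int.natAbs_natCast]
  have hcop8 : Nat.Coprime 8 A := by
    have h2A : Nat.Coprime 2 A := (Nat.prime_two.coprime_iff_not_dvd).mpr hA2
    have := h2A.pow_left 3
    norm_num at this
    exact this
  have r2' : (B / (4 * m)).num.natAbs = A / Nat.gcd A (d * m) := by
    rw [r2, Nat.Coprime.gcd_mul_left_cancel_right _ hcop8]
  rcases Nat.even_or_odd m with ⟨k, hk⟩ | hodd
  · -- m even, aCoeff = 1
    have hk0 : k ≠ 0 := by omega
    have e1 : 4 * B / m = (N : ℚ) / (((d * k : ℕ) : ℤ) : ℚ) := by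
      rw [hBeq, hDQ, hk]; push_cast; field_simp; ring
    have r1 : (4 * B / m).num.natAbs = A / Nat.gcd A (d * k) := by
      rw [e1, num_div_natAbs _ _ (by positivity), Int.natAbs_natCast]
    have hgcd : Nat.gcd A (d * m) = Nat.gcd A (d * k) := by
      rw [hk, show d * (k + k) = 2 * (d * k) by ring,
        Nat.Coprime.gcd_mul_left_cancel_right _
          ((Nat.prime_two.coprime_iff_not_dvd).mpr hA2)]
    have ha : aCoeff m = 1 := by
      rw [aCoeff, if_neg (Nat.not_odd_iff_even.mpr ⟨k, hk⟩)]
    rw [r1, r2', hgcd, ha, one_mul]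
  · -- m odd, aCoeff = 2
    have e1 : 4 * B / m = ((2 * N : ℤ) : ℚ) / (((d * m : ℕ) : ℤ) : ℚ) := by
      rw [hBeq, hDQ]; push_cast; field_simp; ring
    have hcop2 : Nat.Coprime 2 (d * m) := by
      refine (Nat.prime_two.coprime_iff_not_dvd).mpr ?_
      intro h
      rcases (Nat.Prime.dvd_mul Nat.prime_two).mp h with h | h
      · exact hd2 h
      · exact (Nat.not_even_iff_odd.mpr hodd) (even_iff_two_dvd.mpr h)
    have r1 : (4 * B / m).num.natAbs = 2 * (A / Nat.gcd A (d * m)) := by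
      rw [e1, num_div_natAbs _ _ (by positivity), Int.natAbs_mul, Int.natAbs_natCast,
        show (2:ℤ).natAbs = 2 from rfl, Nat.Coprime.gcd_mul_left_cancel _ hcop2]
      exact Nat.mul_div_assoc 2 (Nat.gcd_dvd_left A (d * m))
    have ha : aCoeff m = 2 := by rw [aCoeff, if_pos hodd]
    rw [r1, r2', ha]


/-- The two expressions for `|bP_{4m}|` agree:
`2^(2m-2) (2^(2m-1)-1) · numerator(4 B_m/m) = 2^(2m-2) (2^(2m-1)-1) · a_m · numerator(B_m/(4m))`,
where `numerator q` denotes the numerator of `|q|` in lowest terms. -/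
theorem bP_order_formulas (m : ℕ) (hm : 1 ≤ m) :
    2 ^ (2 * m - 2) * (2 ^ (2 * m - 1) - 1) * (4 * hirzebruchB m / m).num.natAbs
      = 2 ^ (2 * m - 2) * (2 ^ (2 * m - 1) - 1) * (aCoeff m *
          (hirzebruchB m / (4 * m)).num.natAbs) := by
  have hnorm : padicNorm 2 (bernoulli (2 * m)) = 2 :=
    (bern_key (2 * m)).2 (even_two_mul m) (by omega)
  rw [main m hm hnorm]
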